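/- If an RSD tuple [Ψ₀,Ψ₁,χ₀,χ₁] is affinity invariant, then Ψ₁ = Ψ₀ on [0,1], Ψ₀(t) + Ψ₀(1−t) = 1 for all t ∈ [0,1], and χ₀(t₁,t₂,t₃) = χ₁(t₁,t₂,t₃) + χ₁(t₂,t₁,t₃) for all (t₁,t₂,t₃) ∈ Δ₃. In particular, restricting to the edge t₃ = 0: if the interpolation of λ₁ reproduces λ₁ along the edge [p₁,p₂], then Ψ₁(t)+Ψ₁(1−t)=1 and Ψ₀(t)−Ψ₁(t) = 0 for t ∈ [0,1]. -/

import Mathlib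

/-- The 2×2 determinant det[u,v]. -/
def det2 (u v : Fin 2 → ℝ) : ℝ := u 0 * v 1 - u 1 * v 0

/-- Barycentric weight λᵢ of the triangle with vertices p 0, p 1, p 2. -/
noncomputable def bary (p : Fin 3 → Fin 2 → ℝ) (i : Fin 3) (x : Fin 2 → ℝ) : ℝ :=
  det2 (x - p (i + 1)) (x - p (i + 2)) / det2 (p i - p (i + 1)) (p i - p (i + 2))

/-- The constant gradient (linear part) Gᵢ of λᵢ. -/
noncomputable def baryG (p : Fin 3 → Fin 2 → ℝ) (i : Fin 3) (u : Fin 2 → ℝ) : ℝ :=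
  bary p i u - bary p i 0

/-- The unit simplex Δ₃ ⊂ ℝ³. -/
def simplex3 : Set (Fin 3 → ℝ) := {t | (∀ i, 0 ≤ t i) ∧ ∑ i, t i = 1}

/-- The basic triangular interpolation F₀ of first order with shape functions Ψ₀, Ψ₁. -/
noncomputable def F0 (Ψ₀ Ψ₁ : ℝ → ℝ) (p : Fin 3 → Fin 2 → ℝ) (f : Fin 3 → ℝ)
    (A : Fin 3 → (Fin 2 → ℝ) →L[ℝ] ℝ) (x : Fin 2 → ℝ) : ℝ :=
  ∑ k, (Ψ₀ (bary p k x) * f k + Ψ₁ (bary p k x) * A k (x - p k))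

/-- The RSD correction term H of (1.3), summed over the six permutations (ℓ,m,n) of (1,2,3):
H(x) = Σ (Gℓuₙ/Gₙuₙ)·[fℓ·χ₀(λℓ,λm,λn) + Aℓ(pm−pℓ)·χ₁(λℓ,λm,λn)]. -/
noncomputable def Hcorr (χ₀ χ₁ : (Fin 3 → ℝ) → ℝ) (p : Fin 3 → Fin 2 → ℝ) (f : Fin 3 → ℝ)
    (A : Fin 3 → (Fin 2 → ℝ) →L[ℝ] ℝ) (u : Fin 3 → Fin 2 → ℝ) (x : Fin 2 → ℝ) : ℝ :=
  ∑ σ : Equiv.Perm (Fin 3),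
    (baryG p (σ 0) (u (σ 2)) / baryG p (σ 2) (u (σ 2))) *
      (f (σ 0) * χ₀ (fun q => bary p (σ q) x) +
        A (σ 0) (p (σ 1) - p (σ 0)) * χ₁ (fun q => bary p (σ q) x))


/-! ### auxiliary -/

def Ptri : Fin 3 → Fin 2 → ℝ := ![![0,0], ![1,0], ![0,1]]

lemma bary_P0 (x : Fin 2 → ℝ) : bary Ptri 0 x = 1 - x 0 - x 1 := by
  simp [bary, det2, Ptri, Pi.sub_apply, show (0:Fin 3)+1 = 1 from rfl,
    show (0:Fin 3)+2 = 2 from rfl]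
  ring

lemma bary_P1 (x : Fin 2 → ℝ) : bary Ptri 1 x = x 0 := by
  simp [bary, det2, Ptri, Pi.sub_apply, show (1:Fin 3)+1 = 2 from rfl,
    show (1:Fin 3)+2 = 0 from rfl]
  ring

lemma bary_P2 (x : Fin 2 → ℝ) : bary Ptri 2 x = x 1 := by
  simp [bary, det2, Ptri, Pi.sub_apply, show (2:Fin 3)+1 = 0 from rfl,
    show (2:Fin 3)+2 = 1 from rfl]
  ring

lemma baryG_P0 (u : Fin 2 → ℝ) : baryG Ptri 0 u = -u 0 - u 1 := by
  rw [baryG, bary_P0, bary_P0]; simp; ring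

lemma baryG_P1 (u : Fin 2 → ℝ) : baryG Ptri 1 u = u 0 := by
  rw [baryG, bary_P1, bary_P1]; simp

lemma baryG_P2 (u : Fin 2 → ℝ) : baryG Ptri 2 u = u 1 := by
  rw [baryG, bary_P2, bary_P2]; simp

lemma indep_P : AffineIndependent ℝ Ptri := by
  rw [affineIndependent_iff_of_fintype]
  intro w hsum hvsub i
  rw [Finset.weightedVSub_eq_weightedVSubOfPoint_of_sum_eq_zero _ _ _ hsum 0] at hvsub
  simp only [Finset.weightedVSubOfPoint_apply, vsub_eq_sub, sub_zero] at hvsub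
  have h0 := congrFun hvsub 0
  have h1 := congrFun hvsub 1
  simp [Fin.sum_univ_three, Ptri] at h0 h1 hsum
  fin_cases i <;> simp <;> linarith

lemma hull_P (w : Fin 3 → ℝ) (h0 : ∀ i, 0 ≤ w i) (h1 : ∑ i, w i = 1) :
    ![w 1, w 2] ∈ convexHull ℝ (Set.range Ptri) := by
  have : ![w 1, w 2] = Finset.univ.centerMass w Ptri := by
    rw [Finset.centerMass_eq_of_sum_1 _ _ h1]
    funext j
    fin_cases j <;> simp [Fin.sum_univ_three, Ptri]
  rw [this]
  exact Finset.centerMass_mem_convexHull _ (fun i _ => h0 i) (by rw [h1]; norm_num)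
    (fun i _ => Set.mem_range_self i)

lemma fin3_tri (j : Fin 3) : j = 0 ∨ j = 1 ∨ j = 2 := by fin_cases j <;> simp

lemma baryperm_mem (σ : Equiv.Perm (Fin 3)) (x : Fin 2 → ℝ)
    (h0 : 0 ≤ bary Ptri 0 x) (h1 : 0 ≤ bary Ptri 1 x) (h2 : 0 ≤ bary Ptri 2 x) :
    (fun q => bary Ptri (σ q) x) ∈ simplex3 := by
  constructor
  · intro q
    show 0 ≤ bary Ptri (σ q) x
    rcases fin3_tri (σ q) with h | h | h <;> rw [h] <;> assumption
  · rw [show (∑ q, bary Ptri (σ q) x) = ∑ i, bary Ptri i x from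
      Equiv.sum_comp σ (fun i => bary Ptri i x)]
    rw [Fin.sum_univ_three, bary_P0, bary_P1, bary_P2]; ring

lemma Hcorr_edge (χ₀ χ₁ : (Fin 3 → ℝ) → ℝ)
    (hedge : ∀ t ∈ simplex3, (t 0 = 0 ∨ t 1 = 0 ∨ t 2 = 0) → χ₀ t = 0 ∧ χ₁ t = 0)
    (f : Fin 3 → ℝ) (A : Fin 3 → (Fin 2 → ℝ) →L[ℝ] ℝ) (u : Fin 3 → Fin 2 → ℝ)
    (t : ℝ) (ht : t ∈ Set.Icc (0:ℝ) 1) :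
    Hcorr χ₀ χ₁ Ptri f A u ![t, 0] = 0 := by
  apply Finset.sum_eq_zero
  intro σ _
  have hx0 : (![t, (0:ℝ)]) 0 = t := rfl
  have hx1 : (![t, (0:ℝ)]) 1 = 0 := rfl
  have hmem := baryperm_mem σ ![t, 0]
    (by rw [bary_P0, hx0, hx1]; linarith [ht.2]) (by rw [bary_P1, hx0]; exact ht.1)
    (by rw [bary_P2, hx1])
  have hz : (fun q => bary Ptri (σ q) ![t, 0]) (σ⁻¹ 2) = 0 := by
    simp only [show σ (σ⁻¹ 2) = 2 from σ.apply_symm_apply 2]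
    rw [bary_P2]; rfl
  have hvanish : (fun q => bary Ptri (σ q) ![t, 0]) 0 = 0 ∨
      (fun q => bary Ptri (σ q) ![t, 0]) 1 = 0 ∨
      (fun q => bary Ptri (σ q) ![t, 0]) 2 = 0 := by
    rcases fin3_tri (σ⁻¹ 2) with h | h | h <;> rw [h] at hz <;> tauto
  obtain ⟨e0, e1⟩ := hedge _ hmem hvanish
  rw [e0, e1]; ring

open Equiv in
lemma perm3_sum (g : Equiv.Perm (Fin 3) → ℝ) :
    ∑ σ : Equiv.Perm (Fin 3), g σ =
      g 1 + g (swap 0 1) + g (swap 0 2) + g (swap 1 2) +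
      g (swap 0 1 * swap 1 2) + g (swap 0 1 * swap 0 2) := by
  have : (Finset.univ : Finset (Equiv.Perm (Fin 3))) =
      {1, swap 0 1, swap 0 2, swap 1 2, swap 0 1 * swap 1 2, swap 0 1 * swap 0 2} := by
    decide
  rw [this]
  rw [show ({1, swap 0 1, swap 0 2, swap 1 2, swap 0 1 * swap 1 2, swap 0 1 * swap 0 2} :
    Finset (Equiv.Perm (Fin 3))) = insert 1 (insert (swap 0 1) (insert (swap 0 2)
    (insert (swap 1 2) (insert (swap 0 1 * swap 1 2) {swap 0 1 * swap 0 2})))) from rfl]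
  rw [Finset.sum_insert (by decide), Finset.sum_insert (by decide), Finset.sum_insert (by decide),
    Finset.sum_insert (by decide), Finset.sum_insert (by decide), Finset.sum_singleton]
  ring

-- permutation evaluations
lemma pid0 : ((1 : Equiv.Perm (Fin 3)) : Fin 3 → Fin 3) 0 = 0 := by decide
lemma pid1 : ((1 : Equiv.Perm (Fin 3)) : Fin 3 → Fin 3) 1 = 1 := by decide
lemma pid2 : ((1 : Equiv.Perm (Fin 3)) : Fin 3 → Fin 3) 2 = 2 := by decide
lemma p01_0 : (Equiv.swap (0:Fin 3) 1) 0 = 1 := by decide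
lemma p01_1 : (Equiv.swap (0:Fin 3) 1) 1 = 0 := by decide
lemma p01_2 : (Equiv.swap (0:Fin 3) 1) 2 = 2 := by decide
lemma p02_0 : (Equiv.swap (0:Fin 3) 2) 0 = 2 := by decide
lemma p02_1 : (Equiv.swap (0:Fin 3) 2) 1 = 1 := by decide
lemma p02_2 : (Equiv.swap (0:Fin 3) 2) 2 = 0 := by decide
lemma p12_0 : (Equiv.swap (1:Fin 3) 2) 0 = 0 := by decide
lemma p12_1 : (Equiv.swap (1:Fin 3) 2) 1 = 2 := by decide
lemma p12_2 : (Equiv.swap (1:Fin 3) 2) 2 = 1 := by decide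
lemma pc1_0 : (Equiv.swap (0:Fin 3) 1 * Equiv.swap 1 2 : Equiv.Perm (Fin 3)) 0 = 1 := by decide
lemma pc1_1 : (Equiv.swap (0:Fin 3) 1 * Equiv.swap 1 2 : Equiv.Perm (Fin 3)) 1 = 2 := by decide
lemma pc1_2 : (Equiv.swap (0:Fin 3) 1 * Equiv.swap 1 2 : Equiv.Perm (Fin 3)) 2 = 0 := by decide
lemma pc2_0 : (Equiv.swap (0:Fin 3) 1 * Equiv.swap 0 2 : Equiv.Perm (Fin 3)) 0 = 2 := by decide
lemma pc2_1 : (Equiv.swap (0:Fin 3) 1 * Equiv.swap 0 2 : Equiv.Perm (Fin 3)) 1 = 0 := by decide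
lemma pc2_2 : (Equiv.swap (0:Fin 3) 1 * Equiv.swap 0 2 : Equiv.Perm (Fin 3)) 2 = 1 := by decide

noncomputable def Sswap : (Fin 3 → ℝ) →L[ℝ] (Fin 3 → ℝ) :=
  ContinuousLinearMap.pi
    ![ContinuousLinearMap.proj 1, ContinuousLinearMap.proj 0, ContinuousLinearMap.proj 2]

lemma Sswap_apply (y : Fin 3 → ℝ) : Sswap y = ![y 1, y 0, y 2] := by
  funext i
  fin_cases i <;> simp [Sswap]

lemma Sswap_single0 : Sswap (Pi.single 0 1) = Pi.single 1 1 := by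
  rw [Sswap_apply]; funext i; fin_cases i <;> simp [Pi.single_eq_of_ne, Pi.single_eq_same]

lemma Sswap_single2 : Sswap (Pi.single 2 1) = Pi.single 2 1 := by
  rw [Sswap_apply]; funext i; fin_cases i <;> simp [Pi.single_eq_of_ne, Pi.single_eq_same]


/-- If an RSD tuple [Ψ₀,Ψ₁,χ₀,χ₁] is affinity invariant (the interpolation operator
𝔉 : germ ↦ F₀ − H reproduces every affine function x ↦ A x + b over every admissible
pair (P,U)), then Ψ₁ = Ψ₀ on [0,1], Ψ₀(t) + Ψ₀(1−t) = 1 on [0,1], and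
χ₀(t₁,t₂,t₃) = χ₁(t₁,t₂,t₃) + χ₁(t₂,t₁,t₃) on Δ₃; in particular
Ψ₁(t) + Ψ₁(1−t) = 1 and Ψ₀(t) − Ψ₁(t) = 0 on [0,1]. -/
theorem stmt17 (Ψ₀ Ψ₁ : ℝ → ℝ) (χ₀ χ₁ : (Fin 3 → ℝ) → ℝ)
    -- (Ψ₀,Ψ₁) is an admissible pair of shape functions:
    (hΨ₀ : ContDiff ℝ 1 Ψ₀) (hΨ₁ : ContDiff ℝ 1 Ψ₁)
    (h₀0 : Ψ₀ 0 = 0) (h₀d0 : deriv Ψ₀ 0 = 0) (h₁0 : Ψ₁ 0 = 0) (h₁d0 : deriv Ψ₁ 0 = 0)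
    (h₀d1 : deriv Ψ₀ 1 = 0) (h₀1 : Ψ₀ 1 = 1) (h₁1 : Ψ₁ 1 = 1)
    -- χ₀, χ₁ are C¹ complementary shape functions on an open set Ω ⊇ Δ₃:
    (Ω : Set (Fin 3 → ℝ)) (hΩ : IsOpen Ω) (hΔΩ : simplex3 ⊆ Ω)
    (hχ₀ : ContDiffOn ℝ 1 χ₀ Ω) (hχ₁ : ContDiffOn ℝ 1 χ₁ Ω)
    -- χ₀, χ₁ vanish on the edges of Δ₃:
    (hedge : ∀ t ∈ simplex3, (t 0 = 0 ∨ t 1 = 0 ∨ t 2 = 0) → χ₀ t = 0 ∧ χ₁ t = 0)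
    -- condition (3.6): D₃χ₀(t,1−t,0) = Ψ₀′(t), D₃χ₁(t,1−t,0) = Ψ₁′(t)(1−t):
    (hD3 : ∀ t ∈ Set.Icc (0 : ℝ) 1,
      fderiv ℝ χ₀ ![t, 1 - t, 0] (Pi.single 2 1) = deriv Ψ₀ t ∧
      fderiv ℝ χ₁ ![t, 1 - t, 0] (Pi.single 2 1) = deriv Ψ₁ t * (1 - t))
    -- marginal conditions (3.7): χᵣ′ = 0 on Δ₃,₁ ∪ Δ₃,₂, and D₁χᵣ = D₂χᵣ = 0 on Δ₃,₃:
    (hmarg12 : ∀ t ∈ simplex3, (t 0 = 0 ∨ t 1 = 0) →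
      fderiv ℝ χ₀ t = 0 ∧ fderiv ℝ χ₁ t = 0)
    (hmarg3 : ∀ t ∈ simplex3, t 2 = 0 →
      fderiv ℝ χ₀ t (Pi.single 0 1) = 0 ∧ fderiv ℝ χ₀ t (Pi.single 1 1) = 0 ∧
      fderiv ℝ χ₁ t (Pi.single 0 1) = 0 ∧ fderiv ℝ χ₁ t (Pi.single 1 1) = 0)
    -- affinity invariance of the interpolation operator 𝔉 = F₀ − H:
    (hinv : ∀ p : Fin 3 → Fin 2 → ℝ, AffineIndependent ℝ p →
      ∀ u : Fin 3 → Fin 2 → ℝ, (∀ k, baryG p k (u k) ≠ 0) →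
      ∀ (A : (Fin 2 → ℝ) →L[ℝ] ℝ) (b : ℝ), ∀ x ∈ convexHull ℝ (Set.range p),
        F0 Ψ₀ Ψ₁ p (fun k => A (p k) + b) (fun _ => A) x -
          Hcorr χ₀ χ₁ p (fun k => A (p k) + b) (fun _ => A) u x = A x + b) :
    (∀ t ∈ Set.Icc (0 : ℝ) 1, Ψ₁ t = Ψ₀ t) ∧
    (∀ t ∈ Set.Icc (0 : ℝ) 1, Ψ₀ t + Ψ₀ (1 - t) = 1) ∧
    (∀ t ∈ simplex3, χ₀ t = χ₁ t + χ₁ ![t 1, t 0, t 2]) ∧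
    (∀ t ∈ Set.Icc (0 : ℝ) 1, Ψ₁ t + Ψ₁ (1 - t) = 1 ∧ Ψ₀ t - Ψ₁ t = 0) := by
  have hΨ₀d : Differentiable ℝ Ψ₀ := hΨ₀.differentiable one_ne_zero
  have hΨ₁d : Differentiable ℝ Ψ₁ := hΨ₁.differentiable one_ne_zero
  have huCad : ∀ k, baryG Ptri k ((fun _ => ![1,1]) k) ≠ 0 := by
    intro k; fin_cases k <;> simp [baryG_P0, baryG_P1, baryG_P2] <;> norm_num
  have hE1 : ∀ t ∈ Set.Icc (0:ℝ) 1, Ψ₀ t + Ψ₀ (1-t) = 1 := by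
    intro t ht
    have hx : ![t,(0:ℝ)] ∈ convexHull ℝ (Set.range Ptri) := by
      have h := hull_P ![1-t, t, 0]
        (by intro i; fin_cases i <;> simp <;> linarith [ht.1, ht.2])
        (by simp [Fin.sum_univ_three])
      simpa using h
    have hinv1 := hinv Ptri indep_P (fun _ => ![1,1]) huCad 0 1 _ hx
    rw [Hcorr_edge χ₀ χ₁ hedge _ _ _ t ht, sub_zero] at hinv1
    simp only [F0, Fin.sum_univ_three, bary_P0, bary_P1, bary_P2,
      ContinuousLinearMap.zero_apply, Matrix.cons_val_zero, Matrix.cons_val_one,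
      Matrix.head_cons, zero_add, mul_one, mul_zero, add_zero, sub_zero, h₀0] at hinv1
    linarith
  have hE2 : ∀ t ∈ Set.Icc (0:ℝ) 1, Ψ₀ t - (1-t) * Ψ₁ t + t * Ψ₁ (1-t) = t := by
    intro t ht
    have hx : ![t,(0:ℝ)] ∈ convexHull ℝ (Set.range Ptri) := by
      have h := hull_P ![1-t, t, 0]
        (by intro i; fin_cases i <;> simp <;> linarith [ht.1, ht.2])
        (by simp [Fin.sum_univ_three])
      simpa using h
    have hinv2 := hinv Ptri indep_P (fun _ => ![1,1]) huCad
      (ContinuousLinearMap.proj (0 : Fin 2)) 0 _ hx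
    rw [Hcorr_edge χ₀ χ₁ hedge _ _ _ t ht, sub_zero] at hinv2
    simp only [F0, Fin.sum_univ_three, bary_P0, bary_P1, bary_P2,
      ContinuousLinearMap.proj_apply, Matrix.cons_val_zero, Matrix.cons_val_one,
      Matrix.head_cons, Pi.sub_apply, add_zero, sub_zero, h₀0, h₁0] at hinv2
    simp only [Ptri, Matrix.cons_val_zero, Matrix.cons_val_one, Matrix.head_cons,
      Matrix.cons_val_two, Matrix.tail_cons] at hinv2
    norm_num at hinv2
    linear_combination hinv2

  have hChi : ∀ t ∈ simplex3, χ₀ t = χ₁ t + χ₁ ![t 1, t 0, t 2] := by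
    intro t htm
    obtain ⟨htn, hts⟩ := htm
    rw [Fin.sum_univ_three] at hts
    have hx : ![t 1, t 2] ∈ convexHull ℝ (Set.range Ptri) :=
      hull_P t htn (by rw [Fin.sum_univ_three]; exact hts)
    have hb0 : bary Ptri 0 ![t 1, t 2] = t 0 := by
      rw [bary_P0]; simp; linarith
    have hb1 : bary Ptri 1 ![t 1, t 2] = t 1 := by rw [bary_P1]; rfl
    have hb2 : bary Ptri 2 ![t 1, t 2] = t 2 := by rw [bary_P2]; rfl
    have hLid : (fun q => bary Ptri q ![t 1, t 2]) = t := by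
      funext q
      rcases fin3_tri q with h|h|h <;> rw [h] <;> assumption
    have hL01 : (fun q => bary Ptri (Equiv.swap 0 1 q) ![t 1, t 2]) = ![t 1, t 0, t 2] := by
      funext q
      rcases fin3_tri q with h|h|h <;> rw [h]
      · rw [p01_0, hb1]; rfl
      · rw [p01_1, hb0]; rfl
      · rw [p01_2, hb2]; rfl
    have hua : ∀ k, baryG Ptri k ((![![1,1],![1,1],![0,1]] : Fin 3 → Fin 2 → ℝ) k) ≠ 0 := by
      intro k; fin_cases k <;> simp [baryG_P0, baryG_P1, baryG_P2] <;> norm_num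
    have hub : ∀ k, baryG Ptri k ((![![1,1],![1,1],![-1,1]] : Fin 3 → Fin 2 → ℝ) k) ≠ 0 := by
      intro k; fin_cases k <;> simp [baryG_P0, baryG_P1, baryG_P2] <;> norm_num
    have master : ∀ (A : (Fin 2 → ℝ) →L[ℝ] ℝ) (b : ℝ),
        (A (Ptri 0) + b) * χ₀ t + A (Ptri 1 - Ptri 0) * χ₁ t =
        (A (Ptri 1) + b) * χ₀ ![t 1, t 0, t 2] + A (Ptri 0 - Ptri 1) * χ₁ ![t 1, t 0, t 2] := by
      intro A b
      have ha := hinv Ptri indep_P ![![1,1],![1,1],![0,1]] hua A b _ hx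
      have hbb := hinv Ptri indep_P ![![1,1],![1,1],![-1,1]] hub A b _ hx
      have hH : Hcorr χ₀ χ₁ Ptri (fun k => A (Ptri k) + b) (fun _ => A)
            ![![1,1],![1,1],![0,1]] ![t 1, t 2]
          = Hcorr χ₀ χ₁ Ptri (fun k => A (Ptri k) + b) (fun _ => A)
            ![![1,1],![1,1],![-1,1]] ![t 1, t 2] := by
        linarith
      simp only [Hcorr] at hH
      rw [perm3_sum, perm3_sum] at hH
      simp only [Equiv.Perm.coe_one, id_eq, pid0, pid1, pid2, p01_0, p01_1, p01_2,
        p02_0, p02_1, p02_2, p12_0, p12_1, p12_2, pc1_0, pc1_1, pc1_2,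
        pc2_0, pc2_1, pc2_2] at hH
      rw [hLid, hL01] at hH
      simp only [Matrix.cons_val_zero, Matrix.cons_val_one, Matrix.head_cons,
        Matrix.cons_val_two, Matrix.tail_cons, baryG_P0, baryG_P1, baryG_P2] at hH
      norm_num at hH
      simp only [map_sub]
      linarith
    have m0 := master 0 1
    have m1 := master (ContinuousLinearMap.proj (0 : Fin 2)) 0
    simp only [ContinuousLinearMap.zero_apply, zero_add, zero_mul, one_mul,
      add_zero, mul_zero] at m0
    simp only [ContinuousLinearMap.proj_apply, Pi.sub_apply, Ptri,
      Matrix.cons_val_zero, Matrix.cons_val_one, Matrix.head_cons,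
      Matrix.cons_val_two, Matrix.tail_cons, add_zero, zero_add] at m1
    norm_num at m1
    linarith
  have hE3 : ∀ t ∈ Set.Ioo (0:ℝ) 1, deriv Ψ₀ t
      = (1-t) * deriv Ψ₁ t + t * deriv Ψ₁ (1-t) := by
    intro t ht
    obtain ⟨ht0, ht1⟩ := ht
    have hptmem : (![t, 1-t, 0] : Fin 3 → ℝ) ∈ simplex3 := by
      refine ⟨?_, by simp [Fin.sum_univ_three]⟩
      intro i; fin_cases i <;> simp <;> linarith
    have hptΩ : (![t, 1-t, 0] : Fin 3 → ℝ) ∈ Ω := hΔΩ hptmem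
    have hSpt : Sswap ![t, 1-t, 0] = ![1-t, t, 0] := by
      rw [Sswap_apply]; funext i; fin_cases i <;> rfl
    have hSmem : (![1-t, t, 0] : Fin 3 → ℝ) ∈ simplex3 := by
      refine ⟨?_, by simp [Fin.sum_univ_three]⟩
      intro i; fin_cases i <;> simp <;> linarith
    have hSΩ : (![1-t, t, 0] : Fin 3 → ℝ) ∈ Ω := hΔΩ hSmem
    have d0 : DifferentiableAt ℝ χ₀ ![t, 1-t, 0] :=
      (hχ₀.contDiffAt (hΩ.mem_nhds hptΩ)).differentiableAt one_ne_zero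
    have d1 : DifferentiableAt ℝ χ₁ ![t, 1-t, 0] :=
      (hχ₁.contDiffAt (hΩ.mem_nhds hptΩ)).differentiableAt one_ne_zero
    have d1S : DifferentiableAt ℝ χ₁ (Sswap ![t, 1-t, 0]) := by
      rw [hSpt]
      exact (hχ₁.contDiffAt (hΩ.mem_nhds hSΩ)).differentiableAt one_ne_zero
    have dS : DifferentiableAt ℝ (fun y => χ₁ (Sswap y)) ![t, 1-t, 0] :=
      d1S.comp _ Sswap.differentiableAt
    set g : (Fin 3 → ℝ) → ℝ := fun y => χ₀ y - χ₁ y - χ₁ (Sswap y) with hgdef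
    have dg : DifferentiableAt ℝ g ![t, 1-t, 0] := (d0.sub d1).sub dS
    have hg0 : ∀ y ∈ simplex3, g y = 0 := by
      intro y hy
      have hChiy := hChi y hy
      have hy2 : (![y 1, y 0, y 2] : Fin 3 → ℝ) ∈ simplex3 := by
        obtain ⟨hn, hs⟩ := hy
        refine ⟨?_, ?_⟩
        · intro i; fin_cases i <;> simp [hn]
        · rw [Fin.sum_univ_three] at hs ⊢
          simp; linarith
      rw [hgdef]; simp only [Sswap_apply]; linarith
    set v : Fin 3 → ℝ := Pi.single 2 1 - Pi.single 0 1 with hvdef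
    have hline : ∀ s : ℝ, (![t, 1-t, 0] : Fin 3 → ℝ) + s • v = ![t - s, 1 - t, s] := by
      intro s; funext i
      fin_cases i
      · simp [hvdef, Pi.single_eq_of_ne, Pi.single_eq_same]; ring
      · simp [hvdef, Pi.single_eq_of_ne, Pi.single_eq_same]
      · simp [hvdef, Pi.single_eq_of_ne, Pi.single_eq_same]
    have hmem' : ∀ s ∈ Set.Icc (0:ℝ) t, (![t, 1-t, 0] : Fin 3 → ℝ) + s • v ∈ simplex3 := by
      intro s hs; rw [hline]
      refine ⟨?_, by simp [Fin.sum_univ_three]⟩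
      intro i
      fin_cases i
      · simp; linarith [hs.1, hs.2]
      · simp; linarith
      · simpa using hs.1
    have hφ : HasDerivAt (fun s : ℝ => g (![t, 1-t, 0] + s • v)) (fderiv ℝ g ![t, 1-t, 0] v) 0 := by
      have h1 : HasDerivAt (fun s : ℝ => (![t, 1-t, 0] : Fin 3 → ℝ) + s • v) v 0 := by
        simpa using ((hasDerivAt_id (0:ℝ)).smul_const v).const_add (![t, 1-t, 0] : Fin 3 → ℝ)
      have h0pt : (![t, 1-t, 0] : Fin 3 → ℝ) + (0:ℝ) • v = ![t, 1-t, 0] := by simp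
      have h2 : HasFDerivAt g (fderiv ℝ g ![t, 1-t, 0])
          ((fun s : ℝ => (![t, 1-t, 0] : Fin 3 → ℝ) + s • v) 0) := by
        rw [show ((fun s : ℝ => (![t, 1-t, 0] : Fin 3 → ℝ) + s • v) 0) = ![t, 1-t, 0] from h0pt]
        exact dg.hasFDerivAt
      exact h2.comp_hasDerivAt 0 h1
    have hunique : UniqueDiffWithinAt ℝ (Set.Icc (0:ℝ) t) 0 :=
      (uniqueDiffOn_Icc ht0) 0 ⟨le_rfl, le_of_lt ht0⟩
    have hφz : HasDerivWithinAt (fun s : ℝ => g (![t, 1-t, 0] + s • v)) 0 (Set.Icc 0 t) 0 := by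
      have hc : HasDerivWithinAt (fun _ : ℝ => (0:ℝ)) 0 (Set.Icc (0:ℝ) t) 0 :=
        (hasDerivAt_const (0:ℝ) (0:ℝ)).hasDerivWithinAt
      refine hc.congr (fun s hs => hg0 _ (hmem' s hs)) ?_
      exact hg0 _ (hmem' 0 ⟨le_rfl, le_of_lt ht0⟩)
    have hv0 : fderiv ℝ g ![t, 1-t, 0] v = 0 := by
      have e1 := (hφ.hasDerivWithinAt (s := Set.Icc (0:ℝ) t)).derivWithin hunique
      have e2 := hφz.derivWithin hunique
      rw [← e1, e2]
    have hfg : ∀ w : Fin 3 → ℝ, fderiv ℝ g ![t, 1-t, 0] w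
        = fderiv ℝ χ₀ ![t, 1-t, 0] w - fderiv ℝ χ₁ ![t, 1-t, 0] w
          - fderiv ℝ χ₁ (Sswap ![t, 1-t, 0]) (Sswap w) := by
      intro w
      rw [hgdef]
      rw [fderiv_fun_sub (d0.fun_sub d1) dS, fderiv_fun_sub d0 d1]
      have hcomp : fderiv ℝ (fun y => χ₁ (Sswap y)) ![t, 1-t, 0]
          = (fderiv ℝ χ₁ (Sswap ![t, 1-t, 0])).comp (Sswap : (Fin 3 → ℝ) →L[ℝ] (Fin 3 → ℝ)) := by
        have := fderiv_comp (𝕜 := ℝ) (x := ![t, 1-t, 0]) d1S Sswap.differentiableAt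
        rwa [Sswap.fderiv] at this
      rw [hcomp]
      simp
    have hz2 : (![t, 1-t, 0] : Fin 3 → ℝ) 2 = 0 := rfl
    have hz2' : (![1-t, t, 0] : Fin 3 → ℝ) 2 = 0 := rfl
    obtain ⟨m1, m2, m3, m4⟩ := hmarg3 _ hptmem hz2
    obtain ⟨n1, n2, n3, n4⟩ := hmarg3 _ hSmem hz2'
    have hvsplit : fderiv ℝ g ![t, 1-t, 0] (Pi.single 2 1)
        = fderiv ℝ g ![t, 1-t, 0] (Pi.single 0 1) := by
      have := (fderiv ℝ g ![t, 1-t, 0]).map_sub (Pi.single 2 1) (Pi.single 0 1)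
      rw [← hvdef] at this
      rw [hv0] at this
      linarith [this]
    have hval0 : fderiv ℝ g ![t, 1-t, 0] (Pi.single 0 1) = 0 := by
      rw [hfg, Sswap_single0, hSpt]
      rw [m1, m3, n4]; ring
    have hD3t := hD3 t ⟨le_of_lt ht0, le_of_lt ht1⟩
    have hD3t' := hD3 (1-t) ⟨by linarith, by linarith⟩
    have harg : (![1-t, 1-(1-t), 0] : Fin 3 → ℝ) = ![1-t, t, 0] := by
      rw [show (1:ℝ) - (1-t) = t from by ring]
    rw [harg] at hD3t'
    have hval2 : fderiv ℝ g ![t, 1-t, 0] (Pi.single 2 1)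
        = deriv Ψ₀ t - deriv Ψ₁ t * (1-t) - deriv Ψ₁ (1-t) * (1-(1-t)) := by
      rw [hfg, Sswap_single2, hSpt, hD3t.1, hD3t.2]
      rw [show (1:ℝ) - (1-t) = t from by ring] at hD3t' ⊢
      rw [hD3t'.2]
    rw [hval0] at hvsplit
    rw [hvsplit] at hval2
    rw [show (1:ℝ) - (1-t) = t from by ring] at hval2
    linarith [hval2]
  have hSum1 : ∀ t ∈ Set.Icc (0:ℝ) 1, Ψ₁ t + Ψ₁ (1-t) = 1 := by
    intro t ht
    rcases eq_or_lt_of_le ht.1 with h0 | h0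
    · rw [← h0]; rw [show (1:ℝ) - 0 = 1 from by ring, h₁0, h₁1]; ring
    rcases eq_or_lt_of_le ht.2 with h1 | h1
    · rw [h1]; rw [show (1:ℝ) - 1 = 0 from by ring, h₁0, h₁1]; ring
    have H0 : HasDerivAt Ψ₀ (deriv Ψ₀ t) t := (hΨ₀d t).hasDerivAt
    have H1 : HasDerivAt Ψ₁ (deriv Ψ₁ t) t := (hΨ₁d t).hasDerivAt
    have Hneg : HasDerivAt (fun s : ℝ => 1 - s) (-1) t := by
      simpa using (hasDerivAt_id t).const_sub 1
    have H2 : HasDerivAt (fun s : ℝ => Ψ₁ (1 - s)) (deriv Ψ₁ (1-t) * (-1)) t :=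
      ((hΨ₁d (1-t)).hasDerivAt).comp t Hneg
    have H3 : HasDerivAt (fun s : ℝ => (1 - s) * Ψ₁ s)
        ((-1) * Ψ₁ t + (1-t) * deriv Ψ₁ t) t := Hneg.mul H1
    have H4 : HasDerivAt (fun s : ℝ => s * Ψ₁ (1 - s))
        (1 * Ψ₁ (1-t) + t * (deriv Ψ₁ (1-t) * (-1))) t := (hasDerivAt_id t).mul H2
    have hder : HasDerivAt (fun s : ℝ => Ψ₀ s - (1-s) * Ψ₁ s + s * Ψ₁ (1-s) - s)
        (deriv Ψ₀ t - ((-1) * Ψ₁ t + (1-t) * deriv Ψ₁ t)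
          + (1 * Ψ₁ (1-t) + t * (deriv Ψ₁ (1-t) * (-1))) - 1) t :=
      ((H0.sub H3).add H4).sub (hasDerivAt_id t)
    have hev : (fun s : ℝ => Ψ₀ s - (1-s) * Ψ₁ s + s * Ψ₁ (1-s) - s)
        =ᶠ[nhds t] (fun _ => (0:ℝ)) := by
      filter_upwards [Icc_mem_nhds h0 h1] with s hs
      have := hE2 s hs
      linarith
    have hdz : deriv (fun s : ℝ => Ψ₀ s - (1-s) * Ψ₁ s + s * Ψ₁ (1-s) - s) t = 0 := by
      rw [hev.deriv_eq]; exact deriv_const t 0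
    have heq := hder.deriv
    rw [hdz] at heq
    have he3 := hE3 t ⟨h0, h1⟩
    linear_combination -heq - he3
  have hPsiEq : ∀ t ∈ Set.Icc (0:ℝ) 1, Ψ₁ t = Ψ₀ t := by
    intro t ht
    have e2 := hE2 t ht
    have s1 := hSum1 t ht
    linear_combination -e2 + t * s1
  exact ⟨hPsiEq, hE1, hChi, fun t ht => ⟨hSum1 t ht, by have := hPsiEq t ht; linarith⟩⟩
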